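/- For an n-qubit independent error where each qubit is disturbed with the normal distribution with parameter σ, the variance of the disturbed state is V(Ψ) = 2 - 2σⁿ. -/

import Mathlib

open Real

lemma Dpos (σ θ : ℝ) (h0 : 0 ≤ σ) (h1 : σ < 1) : 0 < 1 + σ^2 - 2*σ*Real.cos θ := by
  nlinarith [Real.cos_le_one θ, Real.neg_one_le_cos θ, sq_nonneg (1-σ), sq_nonneg (1+σ)]

lemma denpos (σ θ : ℝ) (h0 : 0 ≤ σ) (h1 : σ < 1) : 0 < 1 - σ*Real.cos θ := by
  nlinarith [Real.cos_le_one θ, Real.neg_one_le_cos θ]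

lemma harctan (σ : ℝ) (h0 : 0 ≤ σ) (h1 : σ < 1) (θ : ℝ) :
    HasDerivAt (fun x => Real.arctan (σ * Real.sin x / (1 - σ * Real.cos x)))
      ((σ * Real.cos θ - σ^2) / (1 + σ^2 - 2*σ*Real.cos θ)) θ := by
  have hden := denpos σ θ h0 h1
  have hD := Dpos σ θ h0 h1
  have hg : HasDerivAt (fun x => σ * Real.sin x / (1 - σ * Real.cos x))
      ((σ * Real.cos θ * (1 - σ * Real.cos θ) - σ * Real.sin θ * (σ * Real.sin θ)) /
        (1 - σ * Real.cos θ)^2) θ := by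
    have h1' : HasDerivAt (fun x => σ * Real.sin x) (σ * Real.cos θ) θ :=
      (Real.hasDerivAt_sin θ).const_mul σ
    have h2' : HasDerivAt (fun x => 1 - σ * Real.cos x) (σ * Real.sin θ) θ := by
      have := ((Real.hasDerivAt_cos θ).const_mul σ).const_sub 1
      simpa using this
    exact h1'.div h2' hden.ne'
  have h := (Real.hasDerivAt_arctan (σ * Real.sin θ / (1 - σ * Real.cos θ))).comp θ hg
  have hkey : 1 + (σ * Real.sin θ / (1 - σ * Real.cos θ))^2
      = (1 + σ^2 - 2*σ*Real.cos θ) / (1 - σ*Real.cos θ)^2 := by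
    rw [div_pow, mul_pow, Real.sin_sq θ]
    field_simp
    ring
  have hnum : σ * Real.cos θ * (1 - σ * Real.cos θ) - σ * Real.sin θ * (σ * Real.sin θ)
      = σ * Real.cos θ - σ^2 := by
    linear_combination (-σ^2) * Real.sin_sq θ
  refine h.congr_deriv ?_
  rw [hnum, hkey]
  field_simp

lemma hF (σ : ℝ) (h0 : 0 < σ) (h1 : σ < 1) (θ : ℝ) :
    HasDerivAt (fun x => σ/2*x + (1+σ^4)/(2*σ^3) * Real.arctan (σ * Real.sin x / (1 - σ * Real.cos x))
      + ((σ^4-1)/(2*σ^2) * Real.sin x + (1-σ^2)/(2*σ) * (Real.sin x * Real.cos x)) / (1+σ^2-2*σ*Real.cos x))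
      ((1-σ^2) * Real.cos θ * Real.sin θ^2 / (1+σ^2-2*σ*Real.cos θ)^2) θ := by
  have hD := Dpos σ θ h0.le h1
  have hA : HasDerivAt (fun x : ℝ => σ/2*x) (σ/2) θ := by
    simpa using (hasDerivAt_id θ).const_mul (σ/2)
  have hB : HasDerivAt (fun x => (1+σ^4)/(2*σ^3) * Real.arctan (σ * Real.sin x / (1 - σ * Real.cos x)))
      ((1+σ^4)/(2*σ^3) * ((σ * Real.cos θ - σ^2) / (1 + σ^2 - 2*σ*Real.cos θ))) θ :=
    (harctan σ h0.le h1 θ).const_mul _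
  have hN : HasDerivAt (fun x => (σ^4-1)/(2*σ^2) * Real.sin x + (1-σ^2)/(2*σ) * (Real.sin x * Real.cos x))
      ((σ^4-1)/(2*σ^2) * Real.cos θ + (1-σ^2)/(2*σ) * (Real.cos θ * Real.cos θ + Real.sin θ * (-Real.sin θ))) θ := by
    exact ((Real.hasDerivAt_sin θ).const_mul _).add
      (((Real.hasDerivAt_sin θ).mul (Real.hasDerivAt_cos θ)).const_mul _)
  have hDd : HasDerivAt (fun x => 1+σ^2-2*σ*Real.cos x) (2*σ*Real.sin θ) θ := by
    have := ((Real.hasDerivAt_cos θ).const_mul (2*σ)).const_sub (1+σ^2)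
    simpa [mul_comm, mul_assoc, mul_left_comm] using this
  have hC := hN.div hDd hD.ne'
  have h := (hA.add hB).add hC
  refine h.congr_deriv ?_
  have hs := Real.sin_sq θ
  have hσ0 : σ ≠ 0 := h0.ne'
  have hD0 : 1 + σ ^ 2 - σ * 2 * Real.cos θ ≠ 0 := by linarith
  field_simp
  rw [hs]
  ring

lemma key_integral (σ : ℝ) (h0 : 0 ≤ σ) (h1 : σ < 1) :
    ∫ θ in (0:ℝ)..π, (1-σ^2) * Real.cos θ * Real.sin θ^2 / (1+σ^2-2*σ*Real.cos θ)^2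
      = π * σ / 2 := by
  have hcont : Continuous (fun θ : ℝ =>
      (1-σ^2) * Real.cos θ * Real.sin θ^2 / (1+σ^2-2*σ*Real.cos θ)^2) := by
    apply Continuous.div (by continuity) (by continuity)
    intro x
    exact pow_ne_zero 2 (Dpos σ x h0 h1).ne'
  rcases eq_or_lt_of_le h0 with h0' | h0'
  · subst h0'
    have hderiv : ∀ θ ∈ Set.uIcc (0:ℝ) π, HasDerivAt (fun x => Real.sin x ^ 3 / 3)
        ((1-(0:ℝ)^2) * Real.cos θ * Real.sin θ^2 / (1+(0:ℝ)^2-2*0*Real.cos θ)^2) θ := by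
      intro θ _
      have h := ((Real.hasDerivAt_sin θ).pow 3).div_const 3
      refine h.congr_deriv ?_
      norm_num
      ring
    rw [intervalIntegral.integral_eq_sub_of_hasDerivAt hderiv (hcont.intervalIntegrable 0 π)]
    simp
  · have hderiv : ∀ θ ∈ Set.uIcc (0:ℝ) π, HasDerivAt (fun x => σ/2*x
        + (1+σ^4)/(2*σ^3) * Real.arctan (σ * Real.sin x / (1 - σ * Real.cos x))
        + ((σ^4-1)/(2*σ^2) * Real.sin x + (1-σ^2)/(2*σ) * (Real.sin x * Real.cos x))
          / (1+σ^2-2*σ*Real.cos x))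
        ((1-σ^2) * Real.cos θ * Real.sin θ^2 / (1+σ^2-2*σ*Real.cos θ)^2) θ :=
      fun θ _ => hF σ h0' h1 θ
    rw [intervalIntegral.integral_eq_sub_of_hasDerivAt hderiv (hcont.intervalIntegrable 0 π)]
    simp [Real.sin_pi, Real.cos_pi, Real.sin_zero, Real.cos_zero]
    ring

theorem variance_normal_n_qubit (σ : ℝ) (hσ : σ ∈ Set.Ico (0:ℝ) 1) (n : ℕ) :
    2 - 2 * (4 * π * ∫ θ₀ in (0:ℝ)..π,
        ((1 / (2 * π ^ 2)) * (1 - σ ^ 2) / (1 + σ ^ 2 - 2 * σ * Real.cos θ₀) ^ 2) *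
          Real.cos θ₀ * Real.sin θ₀ ^ 2) ^ n = 2 - 2 * σ ^ n := by
  obtain ⟨h0, h1⟩ := hσ
  have hrw : ∀ θ : ℝ, ((1 / (2 * π ^ 2)) * (1 - σ ^ 2) / (1 + σ ^ 2 - 2 * σ * Real.cos θ) ^ 2) *
      Real.cos θ * Real.sin θ ^ 2
      = (1 / (2 * π ^ 2)) * ((1-σ^2) * Real.cos θ * Real.sin θ^2 / (1+σ^2-2*σ*Real.cos θ)^2) :=
    fun θ => by ring
  simp only [hrw]
  rw [intervalIntegral.integral_const_mul, key_integral σ h0 h1]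
  have hπ : (4 : ℝ) * π * (1 / (2 * π ^ 2) * (π * σ / 2)) = σ := by
    field_simp
    ring
  rw [hπ]
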